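/- Let Ω₁, …, Ωₙ be nonempty closed convex subsets of ℝˢ and let Ω be an affine subspace of ℝˢ parallel to a nonzero linear subspace L (i.e., Ω = a + L for some a), with Ωᵢ ∩ Ω = ∅ for all i. Given x̄ ∈ Ω, set aᵢ(x̄) = (x̄ − Π(x̄;Ωᵢ))/d(x̄;Ωᵢ). Then x̄ is an optimal solution of the generalized Heron problem (D(x̄) ≤ D(x) for all x ∈ Ω, D(x) = ∑_{i=1}^n d(x;Ωᵢ)) if and only if ∑_{i=1}^n cos(aᵢ(x̄), u) = 0 for every u ∈ L \ {0}. -/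

import Mathlib

open Metric Finset
open scoped RealInnerProductSpace

/-- Corollary 3.3: if `Ω` is an affine subspace parallel to a nonzero linear subspace
`L` (i.e. `Ω = av + L`) and `Ωᵢ ∩ Ω = ∅` for all `i`, then `xbar ∈ Ω` is optimal for
the generalized Heron problem iff `∑ i, cos(aᵢ(xbar), u) = 0` for every nonzero
`u ∈ L`, where `aᵢ(xbar) = (xbar - Π(xbar; Ωᵢ)) / d(xbar; Ωᵢ)`. -/
theorem heron_optimal_iff_cos_affine {s n : ℕ}
    (Ω : Set (EuclideanSpace ℝ (Fin s))) (Ωs : Fin n → Set (EuclideanSpace ℝ (Fin s)))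
    (hne : ∀ i, (Ωs i).Nonempty) (hcl : ∀ i, IsClosed (Ωs i)) (hcv : ∀ i, Convex ℝ (Ωs i))
    (L : Submodule ℝ (EuclideanSpace ℝ (Fin s))) (hL : L ≠ ⊥)
    (av : EuclideanSpace ℝ (Fin s))
    (hΩ : Ω = (fun u => av + u) '' (L : Set (EuclideanSpace ℝ (Fin s))))
    (hdisj : ∀ i, Ωs i ∩ Ω = ∅)
    (xbar : EuclideanSpace ℝ (Fin s)) (hxbar : xbar ∈ Ω)
    (p : Fin n → EuclideanSpace ℝ (Fin s))
    (hp : ∀ i, p i ∈ Ωs i ∧ dist xbar (p i) = Metric.infDist xbar (Ωs i))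
    (a : Fin n → EuclideanSpace ℝ (Fin s))
    (ha : ∀ i, a i = (Metric.infDist xbar (Ωs i))⁻¹ • (xbar - p i)) :
    (∀ x ∈ Ω, ∑ i, Metric.infDist xbar (Ωs i) ≤ ∑ i, Metric.infDist x (Ωs i)) ↔
      (∀ u ∈ L, u ≠ 0 → ∑ i, (inner ℝ (a i) u : ℝ) / (‖a i‖ * ‖u‖) = 0) := by
  set d : Fin n → ℝ := fun i => Metric.infDist xbar (Ωs i) with hd
  set c : Fin n → EuclideanSpace ℝ (Fin s) := fun i => xbar - p i with hc
  have hnotin : ∀ i, xbar ∉ Ωs i := by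
    intro i hin
    have : xbar ∈ Ωs i ∩ Ω := ⟨hin, hxbar⟩
    rw [hdisj i] at this
    exact this
  have hdpos : ∀ i, 0 < d i := fun i =>
    ((hcl i).notMem_iff_infDist_pos (hne i)).mp (hnotin i)
  have hcnorm : ∀ i, ‖c i‖ = d i := by
    intro i
    rw [hc, ← dist_eq_norm, (hp i).2]
  have hanorm : ∀ i, ‖a i‖ = 1 := by
    intro i
    rw [ha i, norm_smul, hcnorm i, norm_inv, Real.norm_eq_abs,
      abs_of_pos (hdpos i), inv_mul_cancel₀ (hdpos i).ne']
  have hainner : ∀ i u, (inner ℝ (a i) u : ℝ) = ⟪c i, u⟫ / d i := by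
    intro i u
    rw [ha i, real_inner_smul_left, div_eq_inv_mul]
  -- projection characterization
  have hproj : ∀ i, ∀ q ∈ Ωs i, ⟪c i, q - p i⟫ ≤ 0 := by
    intro i
    have hmin : ‖xbar - p i‖ = ⨅ w : Ωs i, ‖xbar - w‖ := by
      rw [← dist_eq_norm, (hp i).2, Metric.infDist_eq_iInf]
      simp only [dist_eq_norm]
    exact (norm_eq_iInf_iff_real_inner_le_zero (hcv i) (hp i).1).mp hmin
  -- subgradient inequality
  have hsub : ∀ (i) (y : EuclideanSpace ℝ (Fin s)),
      d i + ⟪c i, y - xbar⟫ / d i ≤ Metric.infDist y (Ωs i) := by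
    intro i y
    rw [Metric.infDist_eq_iInf]
    haveI := (hne i).to_subtype
    refine le_ciInf fun q => ?_
    obtain ⟨q, hq⟩ := q
    have key : ⟪c i, y - xbar⟫ + d i ^ 2 ≤ d i * ‖y - q‖ := by
      have e1 : ⟪c i, xbar - p i⟫ = d i ^ 2 := by
        rw [hc]
        rw [show xbar - p i = c i from rfl, real_inner_self_eq_norm_sq, hcnorm i]
      have e2 : ⟪c i, y - p i⟫ = ⟪c i, y - xbar⟫ + ⟪c i, xbar - p i⟫ := by
        rw [← inner_add_right]
        congr 1
        abel
      have e3 : ⟪c i, y - p i⟫ = ⟪c i, y - q⟫ + ⟪c i, q - p i⟫ := by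
        rw [← inner_add_right]
        congr 1
        abel
      have e4 : ⟪c i, q - p i⟫ ≤ 0 := hproj i q hq
      have e5 : ⟪c i, y - q⟫ ≤ d i * ‖y - q‖ := by
        calc ⟪c i, y - q⟫ ≤ ‖c i‖ * ‖y - q‖ := real_inner_le_norm _ _
          _ = d i * ‖y - q‖ := by rw [hcnorm i]
      linarith [e1, e2, e3, e4, e5]
    have hdiv : ⟪c i, y - xbar⟫ / d i * d i = ⟪c i, y - xbar⟫ :=
      div_mul_cancel₀ _ (hdpos i).ne'
    rw [dist_eq_norm]
    nlinarith [key, hdpos i, hdiv]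
  constructor
  · -- optimality → cosine condition
    intro hopt u huL hu0
    obtain ⟨l, hlL, hxl⟩ := hΩ ▸ hxbar
    set S : ℝ := ∑ i, ⟪c i, u⟫ / d i with hS
    set C : ℝ := ∑ i, ‖u‖ ^ 2 / (2 * d i) with hC
    have hkey : ∀ t : ℝ, 0 ≤ t * S + t ^ 2 * C := by
      intro t
      have hmem : xbar + t • u ∈ Ω := by
        rw [hΩ]
        exact ⟨l + t • u, L.add_mem hlL (L.smul_mem t huL), by
          simp only [← hxl]; abel⟩
      have hle1 := hopt _ hmem
      have hle2 : ∀ i, Metric.infDist (xbar + t • u) (Ωs i)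
          ≤ d i + (t * (⟪c i, u⟫ / d i) + t ^ 2 * (‖u‖ ^ 2 / (2 * d i))) := by
        intro i
        have h1 : Metric.infDist (xbar + t • u) (Ωs i) ≤ ‖c i + t • u‖ := by
          have h1' := Metric.infDist_le_dist_of_mem (x := xbar + t • u) (hp i).1
          rw [dist_eq_norm] at h1'
          have heq : xbar + t • u - p i = c i + t • u := by simp only [hc]; abel
          rwa [heq] at h1'
        have expand : ‖c i + t • u‖ ^ 2
            = d i ^ 2 + 2 * (t * ⟪c i, u⟫) + t ^ 2 * ‖u‖ ^ 2 := by
          rw [@norm_add_sq_real, hcnorm i, real_inner_smul_right, norm_smul,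
            mul_pow, Real.norm_eq_abs, sq_abs]
          try ring
        have h2 : ‖c i + t • u‖ ≤ d i + (t * (⟪c i, u⟫ / d i) + t ^ 2 * (‖u‖ ^ 2 / (2 * d i))) := by
          rw [← mul_le_mul_iff_right₀ (hdpos i)]
          have hda : d i * (⟪c i, u⟫ / d i) = ⟪c i, u⟫ := mul_div_cancel₀ _ (hdpos i).ne'
          have hdb : d i * (‖u‖ ^ 2 / (2 * d i)) = ‖u‖ ^ 2 / 2 := by
            rw [mul_comm 2 (d i), ← div_div, ← mul_div_assoc,
              mul_div_cancel₀ _ (hdpos i).ne']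
          have hrhs : d i * (d i + (t * (⟪c i, u⟫ / d i) + t ^ 2 * (‖u‖ ^ 2 / (2 * d i))))
              = d i ^ 2 + t * ⟪c i, u⟫ + t ^ 2 * (‖u‖ ^ 2 / 2) := by
            rw [mul_add, mul_add, mul_left_comm (d i) t, hda,
              mul_left_comm (d i) (t ^ 2), hdb]
            ring
          rw [hrhs]
          nlinarith [expand, sq_nonneg (d i - ‖c i + t • u‖)]
        linarith
      have hle3 : ∑ i, Metric.infDist (xbar + t • u) (Ωs i)
          ≤ ∑ i, d i + (t * S + t ^ 2 * C) := by
        calc ∑ i, Metric.infDist (xbar + t • u) (Ωs i)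
            ≤ ∑ i, (d i + (t * (⟪c i, u⟫ / d i) + t ^ 2 * (‖u‖ ^ 2 / (2 * d i)))) :=
              Finset.sum_le_sum fun i _ => hle2 i
          _ = ∑ i, d i + (t * S + t ^ 2 * C) := by
              rw [hS, hC, Finset.mul_sum, Finset.mul_sum]
              rw [← Finset.sum_add_distrib, ← Finset.sum_add_distrib]
      linarith
    have hSzero : S = 0 := by
      rcases Nat.eq_zero_or_pos n with hn | hn
      · subst hn
        simp [hS]
      · have hCpos : 0 < C := by
          rw [hC]
          haveI : Nonempty (Fin n) := Fin.pos_iff_nonempty.mp hn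
          have hnu : (0:ℝ) < ‖u‖ := norm_pos_iff.mpr hu0
          apply Finset.sum_pos
          · intro i _
            exact div_pos (pow_pos hnu 2) (mul_pos two_pos (hdpos i))
          · exact Finset.univ_nonempty
        have h1 := hkey (-S / (2 * C))
        have h2 : -S ^ 2 = (-S / (2 * C) * S + (-S / (2 * C)) ^ 2 * C) * (4 * C) := by
          field_simp
          ring
        have h3 : (0 : ℝ) ≤ -S ^ 2 := by
          rw [h2]
          exact mul_nonneg h1 (by positivity)
        have h4 : S ^ 2 = 0 := le_antisymm (by linarith) (sq_nonneg S)
        exact sq_eq_zero_iff.mp h4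
    have : ∑ i, (inner ℝ (a i) u : ℝ) / (‖a i‖ * ‖u‖) = S / ‖u‖ := by
      rw [hS, Finset.sum_div]
      refine Finset.sum_congr rfl fun i _ => ?_
      rw [hainner i u, hanorm i, one_mul, div_div]
    rw [this, hSzero, zero_div]
  · -- cosine condition → optimality
    intro hcos x hx
    obtain ⟨l, hlL, hxl⟩ := hΩ ▸ hxbar
    obtain ⟨m, hmL, hxm⟩ := hΩ ▸ hx
    have hwL : x - xbar ∈ L := by
      rw [← hxl, ← hxm, show av + m - (av + l) = m - l by abel]
      exact L.sub_mem hmL hlL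
    rcases eq_or_ne (x - xbar) 0 with hw0 | hw0
    · have : x = xbar := by
        have := sub_eq_zero.mp hw0
        exact this
      rw [this]
    · have hScos := hcos _ hwL hw0
      have hwnorm : (0:ℝ) < ‖x - xbar‖ := norm_pos_iff.mpr hw0
      have hS0 : ∑ i, ⟪c i, x - xbar⟫ / d i = 0 := by
        have : ∑ i, (inner ℝ (a i) (x - xbar) : ℝ) / (‖a i‖ * ‖x - xbar‖)
            = (∑ i, ⟪c i, x - xbar⟫ / d i) / ‖x - xbar‖ := by
          rw [Finset.sum_div]
          refine Finset.sum_congr rfl fun i _ => ?_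
          rw [hainner, hanorm i, one_mul, div_div]
        rw [this] at hScos
        exact (div_eq_zero_iff.mp hScos).resolve_right hwnorm.ne'
      calc ∑ i, d i = ∑ i, (d i + ⟪c i, x - xbar⟫ / d i) := by
            rw [Finset.sum_add_distrib, hS0, add_zero]
        _ ≤ ∑ i, Metric.infDist x (Ωs i) := Finset.sum_le_sum fun i _ => hsub i x
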